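/- In the space of bounded functions [0,1] → ℝ having the Baire property, equipped with the supremum norm, the set of nowhere continuous functions is residual. -/

import Mathlib

open Set Topology Filter

namespace Stmt13Aux

abbrev II := Set.Icc (0:ℝ) 1

/-- Kuratowski-type lemma: a Baire measurable function is continuous when
restricted to a suitable residual set. -/
lemma kuratowski (f : II → ℝ)
    (hf : ∀ s : Set ℝ, IsOpen s → BaireMeasurableSet (f ⁻¹' s)) :
    ∃ D : Set II, D ∈ residual II ∧ ∀ p ∈ D, ∀ η > 0, ∃ δ > 0,
      ∀ y ∈ D, dist y p < δ → |f y - f p| < η := by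
  have key : ∀ j : ℚ × ℕ, ∃ u : Set II, IsOpen u ∧
      (f ⁻¹' Metric.ball (j.1 : ℝ) (1/(j.2+1))) =ᵇ u :=
    fun j => (hf _ Metric.isOpen_ball).residualEq_isOpen
  choose U hUo hU using key
  set T : ℚ × ℕ → Set II := fun j =>
    {x | x ∈ f ⁻¹' Metric.ball (j.1 : ℝ) (1/(j.2+1)) ↔ x ∈ U j} with hT
  have hTres : ∀ j, T j ∈ residual II := by
    intro j
    have := hU j
    filter_upwards [this] with x hx
    exact Iff.of_eq hx
  refine ⟨⋂ j, T j, countable_iInter_mem.mpr hTres, ?_⟩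
  intro p hp η hη
  obtain ⟨n, hn⟩ : ∃ n : ℕ, 1/((n:ℝ)+1) < η/2 := exists_nat_one_div_lt (by linarith)
  have hr : (0:ℝ) < 1/((n:ℝ)+1) := by positivity
  obtain ⟨q, hq⟩ : ∃ q : ℚ, |f p - q| < 1/((n:ℝ)+1) := exists_rat_near (f p) hr
  have hpmem : p ∈ f ⁻¹' Metric.ball ((q:ℝ)) (1/((n:ℝ)+1)) := by
    simp only [mem_preimage, Metric.mem_ball, Real.dist_eq]
    exact_mod_cast hq
  have hpT : p ∈ T (q, n) := by
    have := mem_iInter.mp hp (q, n); exact this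
  have hpU : p ∈ U (q, n) := by
    have : p ∈ f ⁻¹' Metric.ball ((q:ℝ)) (1/(((q,n).2:ℝ)+1)) := by exact_mod_cast hpmem
    exact (hpT).mp this
  obtain ⟨δ, hδ, hball⟩ := Metric.isOpen_iff.mp (hUo (q, n)) p hpU
  refine ⟨δ, hδ, ?_⟩
  intro y hy hyp
  have hyU : y ∈ U (q, n) := hball (by simpa [Metric.mem_ball] using hyp)
  have hyT : y ∈ T (q, n) := mem_iInter.mp hy (q, n)
  have hymem : y ∈ f ⁻¹' Metric.ball ((q:ℝ)) (1/(((q,n).2:ℝ)+1)) := hyT.mpr hyU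
  have h1 : |f y - (q:ℝ)| < 1/((n:ℝ)+1) := by
    simpa [Metric.mem_ball, Real.dist_eq] using hymem
  have h2 : |f p - (q:ℝ)| < 1/((n:ℝ)+1) := by
    simpa [Metric.mem_ball, Real.dist_eq] using hpmem
  calc |f y - f p| = |(f y - (q:ℝ)) - (f p - (q:ℝ))| := by ring_nf
    _ ≤ |f y - (q:ℝ)| + |f p - (q:ℝ)| := abs_sub _ _
    _ < 1/((n:ℝ)+1) + 1/((n:ℝ)+1) := by linarith
    _ ≤ η := by linarith

/-- Countable sets in the unit interval are meagre. -/
lemma countable_isMeagre {Q : Set II} (hQ : Q.Countable) : IsMeagre Q := by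
  rw [IsMeagre]
  have : Qᶜ = ⋂ x ∈ Q, ({x}ᶜ : Set II) := by
    rw [← compl_iUnion₂, biUnion_of_singleton]
  rw [this]
  exact (countable_bInter_mem hQ).mpr fun x _ =>
    residual_of_dense_open isOpen_compl_singleton (dense_compl_singleton x)

end Stmt13Aux

open Stmt13Aux

theorem stmt_13 :
    IsMeagre {f : {g : lp (fun _ : Set.Icc (0:ℝ) 1 => ℝ) ⊤ //
        ∀ s : Set ℝ, IsOpen s → BaireMeasurableSet ((⇑g) ⁻¹' s)} |
      ∃ x, ContinuousAt (⇑(f : lp (fun _ : Set.Icc (0:ℝ) 1 => ℝ) ⊤)) x} := by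
  set X := {g : lp (fun _ : Set.Icc (0:ℝ) 1 => ℝ) ⊤ //
        ∀ s : Set ℝ, IsOpen s → BaireMeasurableSet ((⇑g) ⁻¹' s)} with hX
  set A : Set X := {f | ∃ x, ContinuousAt (⇑(f : lp (fun _ : Set.Icc (0:ℝ) 1 => ℝ) ⊤)) x} with hA
  -- It suffices to show the closure of A is nowhere dense.
  have hint : interior (closure A) = ∅ := by
    by_contra hne
    obtain ⟨f, hf⟩ := nonempty_iff_ne_empty.mpr hne
    obtain ⟨r, hr, hball⟩ := Metric.isOpen_iff.mp isOpen_interior f hf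
    replace hball : Metric.ball f r ⊆ closure A := hball.trans interior_subset
    set ε := r/2 with hε
    have hε0 : 0 < ε := by positivity
    -- the function and its residual continuity set
    set fn : II → ℝ := ⇑(f : lp (fun _ : II => ℝ) ⊤) with hfn
    obtain ⟨D, hDres, hDcont⟩ := kuratowski fn f.2
    have hDdense : Dense D := dense_of_mem_residual hDres
    obtain ⟨Q, hQD, hQc, hQdense⟩ := hDdense.exists_countable_dense_subset
    have hQmeagre : IsMeagre Q := countable_isMeagre hQc
    have hDQdense : Dense (D \ Q) := by
      apply dense_of_mem_residual
      rw [diff_eq]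
      exact inter_mem hDres hQmeagre
    -- the perturbation
    set pfun : II → ℝ := Q.indicator (fun _ => ε) with hpfun
    have hpbdd : ∀ x, ‖pfun x‖ ≤ ε := by
      intro x
      by_cases hx : x ∈ Q <;>
        simp [hpfun, Set.indicator_of_mem, Set.indicator_of_notMem, hx, hε0.le, abs_of_nonneg]
    have hpmem : Memℓp pfun ⊤ := memℓp_infty ⟨ε, by rintro - ⟨x, rfl⟩; exact hpbdd x⟩
    set p : lp (fun _ : II => ℝ) ⊤ := ⟨pfun, hpmem⟩ with hp
    set g : lp (fun _ : II => ℝ) ⊤ := (f : lp (fun _ : II => ℝ) ⊤) + p with hg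
    have hgfun : ∀ x, g x = fn x + pfun x := fun x => rfl
    -- g is Baire measurable
    have hgX : ∀ s : Set ℝ, IsOpen s → BaireMeasurableSet ((⇑g) ⁻¹' s) := by
      intro s hs
      have heq : (⇑g) ⁻¹' s =
          (Q ∩ fn ⁻¹' ((fun y => y + ε) ⁻¹' s)) ∪ (Qᶜ ∩ fn ⁻¹' s) := by
        ext x
        by_cases hx : x ∈ Q <;>
          simp [hgfun, hpfun, Set.indicator_of_mem, Set.indicator_of_notMem, hx]
      rw [heq]
      have h1 : BaireMeasurableSet (fn ⁻¹' ((fun y => y + ε) ⁻¹' s)) :=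
        f.2 _ (hs.preimage (continuous_add_right ε))
      have h2 : BaireMeasurableSet (fn ⁻¹' s) := f.2 s hs
      exact (hQmeagre.baireMeasurableSet.inter h1).union
        (hQmeagre.baireMeasurableSet.compl.inter h2)
    set gX : X := ⟨g, hgX⟩ with hgX'
    have hdist : dist gX f ≤ ε := by
      have : gX.1 - f.1 = p := by show (f.1 + p) - f.1 = p; exact add_sub_cancel_left _ _
      rw [Subtype.dist_eq, dist_eq_norm, this]
      exact lp.norm_le_of_forall_le hε0.le hpbdd
    have hgball : gX ∈ Metric.ball f r := by
      rw [Metric.mem_ball]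
      calc dist gX f ≤ ε := hdist
        _ < r := by rw [hε]; linarith
    have hgcl : gX ∈ closure A := hball hgball
    obtain ⟨h, hhA, hhd⟩ := Metric.mem_closure_iff.mp hgcl (ε/8) (by positivity)
    obtain ⟨x₀, hx₀⟩ := hhA
    set hn : II → ℝ := ⇑(h : lp (fun _ : II => ℝ) ⊤) with hhn
    -- pointwise closeness of h and g
    have hclose : ∀ x, |hn x - g x| < ε/8 := by
      intro x
      have := lp.norm_apply_le_norm ENNReal.top_ne_zero
        ((h : lp (fun _ : II => ℝ) ⊤) - g) x
      have hd : ‖(h : lp (fun _ : II => ℝ) ⊤) - g‖ < ε/8 := by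
        rw [← dist_eq_norm, dist_comm]
        rw [Subtype.dist_eq] at hhd; exact hhd
      have happ : ((h : lp (fun _ : II => ℝ) ⊤) - g) x = hn x - g x := rfl
      rw [happ] at this
      calc |hn x - g x| = ‖hn x - g x‖ := rfl
        _ ≤ ‖(h : lp (fun _ : II => ℝ) ⊤) - g‖ := this
        _ < ε/8 := hd
    -- continuity of h at x₀
    obtain ⟨δ₀, hδ₀, hcont⟩ := Metric.continuousAt_iff.mp hx₀ (ε/16) (by positivity)
    -- pick p₀ ∈ Q near x₀
    obtain ⟨p₀, hp₀b, hp₀Q⟩ := Metric.dense_iff.mp hQdense x₀ (δ₀/2) (by positivity)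
    have hp₀d : dist p₀ x₀ < δ₀/2 := Metric.mem_ball.mp hp₀b
    have hp₀D : p₀ ∈ D := hQD hp₀Q
    -- continuity of fn on D at p₀
    obtain ⟨δ₁, hδ₁, hfncont⟩ := hDcont p₀ hp₀D (ε/4) (by positivity)
    -- pick q₀ ∈ D \ Q near p₀
    obtain ⟨q₀, hq₀b, hq₀DQ⟩ := Metric.dense_iff.mp hDQdense p₀ (min δ₁ (δ₀/2))
      (lt_min hδ₁ (by positivity))
    have hq₀d : dist q₀ p₀ < min δ₁ (δ₀/2) := Metric.mem_ball.mp hq₀b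
    have hq₀D : q₀ ∈ D := hq₀DQ.1
    have hq₀Q : q₀ ∉ Q := hq₀DQ.2
    -- values of g at p₀ and q₀
    have hgp : g p₀ = fn p₀ + ε := by
      rw [hgfun]; simp [hpfun, Set.indicator_of_mem hp₀Q]
    have hgq : g q₀ = fn q₀ := by
      rw [hgfun]; simp [hpfun, Set.indicator_of_notMem hq₀Q]
    -- fn q₀ close to fn p₀
    have hfnpq : |fn q₀ - fn p₀| < ε/4 := by
      exact hfncont q₀ hq₀D (lt_of_lt_of_le hq₀d (min_le_left _ _))
    -- oscillation of g
    have hosc : |g p₀ - g q₀| ≥ 3*ε/4 := by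
      rw [hgp, hgq]
      have : fn p₀ + ε - fn q₀ = ε - (fn q₀ - fn p₀) := by ring
      rw [this]
      calc 3*ε/4 = ε - ε/4 := by ring
        _ ≤ ε - |fn q₀ - fn p₀| := by linarith
        _ ≤ |ε - (fn q₀ - fn p₀)| := by
            have := abs_nonneg (fn q₀ - fn p₀)
            have h' := neg_abs_le (fn q₀ - fn p₀)
            have h'' := le_abs_self (ε - (fn q₀ - fn p₀))
            have := le_abs_self (fn q₀ - fn p₀)
            linarith [le_abs_self (ε - (fn q₀ - fn p₀))]
    -- oscillation of hn
    have hoscn : |hn p₀ - hn q₀| > ε/2 := by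
      have h1 := hclose p₀
      have h2 := hclose q₀
      have : |g p₀ - g q₀| ≤ |hn p₀ - hn q₀| + |hn p₀ - g p₀| + |hn q₀ - g q₀| := by
        have := abs_sub_le (g p₀) (hn p₀) (g q₀)
        have := abs_sub_le (hn p₀) (hn q₀) (g q₀)
        have h3 := abs_sub_comm (g p₀) (hn p₀)
        calc |g p₀ - g q₀| ≤ |g p₀ - hn p₀| + |hn p₀ - g q₀| := abs_sub_le _ _ _
          _ ≤ |g p₀ - hn p₀| + (|hn p₀ - hn q₀| + |hn q₀ - g q₀|) := by
              linarith [abs_sub_le (hn p₀) (hn q₀) (g q₀)]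
          _ = |hn p₀ - hn q₀| + |hn p₀ - g p₀| + |hn q₀ - g q₀| := by
              rw [abs_sub_comm (g p₀) (hn p₀)]; ring
      linarith
    -- but hn is continuous at x₀ with small oscillation
    have hpd : dist p₀ x₀ < δ₀ := by linarith
    have hqd : dist q₀ x₀ < δ₀ := by
      calc dist q₀ x₀ ≤ dist q₀ p₀ + dist p₀ x₀ := dist_triangle _ _ _
        _ < min δ₁ (δ₀/2) + δ₀/2 := by linarith [hq₀d, hp₀d]
        _ ≤ δ₀/2 + δ₀/2 := by linarith [min_le_right δ₁ (δ₀/2)]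
        _ = δ₀ := by ring
    have hcp := hcont hpd
    have hcq := hcont hqd
    rw [Real.dist_eq] at hcp hcq
    have : |hn p₀ - hn q₀| < ε/8 := by
      calc |hn p₀ - hn q₀| ≤ |hn p₀ - hn x₀| + |hn q₀ - hn x₀| := by
            have := abs_sub_le (hn p₀) (hn x₀) (hn q₀)
            rw [abs_sub_comm (hn x₀) (hn q₀)] at this
            linarith [abs_sub_le (hn p₀) (hn x₀) (hn q₀), abs_sub_comm (hn x₀) (hn q₀)]
        _ < ε/16 + ε/16 := by exact add_lt_add hcp hcq
        _ = ε/8 := by ring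
    linarith
  -- conclude
  rw [isMeagre_iff_countable_union_isNowhereDense]
  refine ⟨{closure A}, ?_, countable_singleton _, ?_⟩
  · rintro t rfl
    rw [IsNowhereDense, closure_closure]
    exact hint
  · rw [sUnion_singleton]
    exact subset_closure
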